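/- For all u, v ∈ ℂ^N and r, s ∈ ℤ^N, the commutator of derivations satisfies [D(u,r), D(v,s)] = D(w, r+s), where w = ⟨u,s⟩·v − ⟨v,r⟩·u. -/

import Mathlib

/-- The Laurent polynomial algebra `A = ℂ[t₁^{±1}, …, t_N^{±1}]`, realized as the
group algebra of `ℤ^N` over `ℂ`; the monomial `t^r` is `AddMonoidAlgebra.single r 1`. -/
noncomputable abbrev LaurentA (N : ℕ) := AddMonoidAlgebra ℂ (Fin N → ℤ)

/-- `IsD N u r D` says that `D` is the derivation `D(u,r)` of `A`, i.e. the (unique)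
`ℂ`-linear derivation with `D(t^s) = ⟨u,s⟩ · t^{r+s}` for all `s ∈ ℤ^N`. -/
def IsD (N : ℕ) (u : Fin N → ℂ) (r : Fin N → ℤ)
    (D : Derivation ℂ (LaurentA N) (LaurentA N)) : Prop :=
  ∀ s : Fin N → ℤ,
    D (AddMonoidAlgebra.single s (1 : ℂ)) =
      (∑ i, u i * (s i : ℂ)) • AddMonoidAlgebra.single (r + s) (1 : ℂ)

/-- For all `u, v ∈ ℂ^N` and `r, s ∈ ℤ^N`:
`[D(u,r), D(v,s)] = D(w, r+s)` where `w = ⟨u,s⟩·v − ⟨v,r⟩·u`. -/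
theorem stmt2 (N : ℕ) (hN : 1 ≤ N) (u v : Fin N → ℂ) (r s : Fin N → ℤ)
    (D₁ D₂ D₃ : Derivation ℂ (LaurentA N) (LaurentA N))
    (h₁ : IsD N u r D₁) (h₂ : IsD N v s D₂)
    (h₃ : IsD N ((∑ i, u i * (s i : ℂ)) • v - (∑ i, v i * (r i : ℂ)) • u) (r + s) D₃) :
    ⁅D₁, D₂⁆ = D₃ := by
  have expand : ∀ (w : Fin N → ℂ) (a b : Fin N → ℤ),
      ∑ i, w i * ((a + b) i : ℂ) = (∑ i, w i * (a i : ℂ)) + ∑ i, w i * (b i : ℂ) := by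
    intro w a b
    rw [← Finset.sum_add_distrib]
    congr 1; ext i
    simp only [Pi.add_apply]
    push_cast
    ring
  have key : ∀ m : Fin N → ℤ,
      ⁅D₁, D₂⁆ (AddMonoidAlgebra.single m (1:ℂ)) = D₃ (AddMonoidAlgebra.single m (1:ℂ)) := by
    intro m
    rw [Derivation.commutator_apply, h₂ m, h₁ m, Derivation.map_smul, Derivation.map_smul,
      h₁ (s + m), h₂ (r + m), h₃ m, smul_smul, smul_smul,
      show r + (s + m) = r + s + m by rw [add_assoc],
      show s + (r + m) = r + s + m by rw [← add_assoc, add_comm s r], ← sub_smul]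
    congr 1
    rw [expand u s m, expand v r m]
    simp only [Pi.sub_apply, Pi.smul_apply, smul_eq_mul, sub_mul, Finset.sum_sub_distrib,
      mul_assoc, ← Finset.mul_sum]
    ring
  apply Derivation.ext
  intro a
  induction a using AddMonoidAlgebra.induction_linear with
  | zero => simp
  | add f g hf hg => rw [map_add, map_add, hf, hg]
  | single a b =>
    have : (AddMonoidAlgebra.single a b : LaurentA N) = b • AddMonoidAlgebra.single a (1:ℂ) := by
      simp [AddMonoidAlgebra.smul_single']
    rw [this, Derivation.map_smul, Derivation.map_smul, key a]
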